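/- Let p be a prime with p ≠ 2 and p ≠ 3. Then the equation w² = p − 72pz⁴ has solutions z, w in each of the fields ℝ, ℚ₂, ℚ₃ and ℚ_p if and only if p ≡ 1 (mod 24) and 2 is a fourth power modulo p. -/

import Mathlib

/- ### Auxiliary decidable lemmas over small rings -/

lemma aux2a : ∀ P W Z : ZMod (2^4), P.val % 2 = 1 → W^2 = P - 72*P*Z^4 → P.val % 8 = 1 := by
  decide

lemma aux3a : ∀ P W Z : ZMod (3^2), P.val % 3 ≠ 0 → W^2 = P - 72*P*Z^4 → P.val % 3 = 1 := by
  decide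

lemma aux3b : ∀ P A B : ZMod (3^3), P.val % 3 ≠ 0 → A.val % 3 ≠ 0 → B^2 + 72*P*A^4 = 0 →
    P.val % 3 = 1 := by decide

lemma aux3u : ∀ a c : ZMod (3^3), a * c = 1 → a.val % 3 ≠ 0 := by decide

/- ### Generic p-adic norm helpers -/

lemma norm_sub_eq_of_lt {q : ℕ} [Fact q.Prime] {a b : ℚ_[q]} (h : ‖a‖ < ‖b‖) :
    ‖a - b‖ = ‖b‖ := by
  rw [sub_eq_add_neg, Padic.add_eq_max_of_ne (by rw [norm_neg]; exact h.ne),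
    norm_neg, max_eq_right h.le]

lemma padic_no_odd_sq {q : ℕ} [Fact q.Prime] {w y : ℚ_[q]} (hw : w ^ 2 = y) {m : ℤ}
    (hm : ‖y‖ = (q : ℝ) ^ m) (hodd : m % 2 = 1) : False := by
  have hq1 : (1 : ℝ) < (q : ℝ) := by
    exact_mod_cast (Fact.out : q.Prime).one_lt
  have hy0 : y ≠ 0 := by
    intro h
    rw [h, norm_zero] at hm
    exact (zpow_pos (by linarith : (0:ℝ) < (q:ℝ)) m).ne' hm.symm
  have hw0 : w ≠ 0 := by
    intro h; rw [h] at hw; simp at hw; exact hy0 hw.symm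
  have h1 : ‖w ^ 2‖ = (q : ℝ) ^ (-w.valuation * 2) := by
    rw [norm_pow, Padic.norm_eq_zpow_neg_valuation hw0, ← zpow_natCast ((q:ℝ) ^ (-w.valuation)) 2,
      ← zpow_mul]
    norm_num
  rw [hw, hm] at h1
  have := zpow_right_injective₀ (by linarith : (0:ℝ) < (q:ℝ)) (by linarith) h1.symm
  omega

lemma norm_nat_eq_one {q : ℕ} [Fact q.Prime] {n : ℕ} (h : ¬ (q:ℤ) ∣ (n:ℤ)) :
    ‖((n : ℕ) : ℚ_[q])‖ = 1 := by
  have h1 : ‖((n : ℤ) : ℚ_[q])‖ ≤ 1 := Padic.norm_int_le_one n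
  have h2 : ¬ ‖((n : ℤ) : ℚ_[q])‖ < 1 := by
    rw [Padic.norm_intCast_lt_one_iff]; exact h
  push_cast at h1 h2
  linarith [lt_or_eq_of_le h1]

lemma toZMod_zero_iff {q : ℕ} [Fact q.Prime] (x : ℤ_[q]) :
    PadicInt.toZMod x = 0 ↔ (q : ℤ_[q]) ∣ x := by
  rw [← RingHom.mem_ker, PadicInt.ker_toZMod, PadicInt.maximalIdeal_eq_span_p,
    Ideal.mem_span_singleton]

lemma norm_eq_one_of_toZMod_ne {q : ℕ} [Fact q.Prime] (x : ℤ_[q])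
    (h : PadicInt.toZMod x ≠ 0) : ‖x‖ = 1 := by
  refine le_antisymm (PadicInt.norm_le_one x) ?_
  by_contra hlt
  push_neg at hlt
  rw [PadicInt.norm_lt_one_iff_dvd, ← toZMod_zero_iff] at hlt
  exact h hlt

/- ### Hensel lemma applications -/

open Polynomial in
lemma sq_root_padic {q : ℕ} [Fact q.Prime] (c : ℤ_[q])
    (h : ‖1 - c‖ < ‖(2 : ℤ_[q])‖ ^ 2) : ∃ w : ℤ_[q], w ^ 2 = c := by
  have hh : ‖(X^2 - C c : ℤ_[q][X]).eval 1‖ <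
      ‖((X^2 - C c : ℤ_[q][X]).derivative).eval 1‖ ^ 2 := by
    simpa [one_add_one_eq_two] using h
  obtain ⟨z, hz, -⟩ := hensels_lemma hh
  refine ⟨z, ?_⟩
  simp only [Polynomial.coe_aeval_eq_eval, Polynomial.eval_sub, Polynomial.eval_pow, Polynomial.eval_X, Polynomial.eval_C] at hz
  linear_combination hz

open Polynomial in
lemma quartic_root_padic {q : ℕ} [Fact q.Prime] (c : ℤ_[q])
    (a : ℤ_[q]) (ha : PadicInt.toZMod (72 * a ^ 4 - c) = 0)
    (hd : PadicInt.toZMod (288 * a ^ 3 : ℤ_[q]) ≠ 0) :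
    ∃ z : ℤ_[q], ((72:ℕ) : ℤ_[q]) * z ^ 4 = c := by
  have hh : ‖(C 72 * X^4 - C c : ℤ_[q][X]).eval a‖ <
      ‖((C 72 * X^4 - C c : ℤ_[q][X]).derivative).eval a‖ ^ 2 := by
    have h1 : ‖(C 72 * X^4 - C c : ℤ_[q][X]).eval a‖ < 1 := by
      simp only [Polynomial.eval_sub, Polynomial.eval_mul, Polynomial.eval_pow,
        Polynomial.eval_X, Polynomial.eval_C]
      rw [PadicInt.norm_lt_one_iff_dvd, ← toZMod_zero_iff]
      exact ha
    have h2 : ‖((C 72 * X^4 - C c : ℤ_[q][X]).derivative).eval a‖ = 1 := by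
      have : ((C 72 * X^4 - C c : ℤ_[q][X]).derivative).eval a = 288 * a ^ 3 := by
        simp [Polynomial.derivative_sub, Polynomial.derivative_C]
        ring
      rw [this]
      exact norm_eq_one_of_toZMod_ne _ hd
    rw [h2]; simpa using h1
  obtain ⟨z, hz, -⟩ := hensels_lemma hh
  refine ⟨z, ?_⟩
  simp only [Polynomial.coe_aeval_eq_eval, Polynomial.eval_sub, Polynomial.eval_mul, Polynomial.eval_pow, Polynomial.eval_X,
    Polynomial.eval_C] at hz
  rw [show ((72:ℕ) : ℤ_[q]) = 72 by norm_num]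
  linear_combination hz

/- ### Small arithmetic facts -/

lemma not_dvd_72 {p : ℕ} [Fact p.Prime] (hp2 : p ≠ 2) (hp3 : p ≠ 3) : ¬ p ∣ 72 := by
  intro hd
  rw [show (72:ℕ) = 2^3 * 3^2 by norm_num] at hd
  rcases (Nat.Prime.dvd_mul Fact.out).mp hd with h1 | h1
  · exact hp2 ((Nat.prime_dvd_prime_iff_eq Fact.out (by norm_num)).mp
      ((Fact.out : p.Prime).dvd_of_dvd_pow h1))
  · exact hp3 ((Nat.prime_dvd_prime_iff_eq Fact.out (by norm_num)).mp
      ((Fact.out : p.Prime).dvd_of_dvd_pow h1))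

lemma not_dvd_288 {p : ℕ} [Fact p.Prime] (hp2 : p ≠ 2) (hp3 : p ≠ 3) : ¬ p ∣ 288 := by
  intro hd
  rw [show (288:ℕ) = 2^5 * 3^2 by norm_num] at hd
  rcases (Nat.Prime.dvd_mul Fact.out).mp hd with h1 | h1
  · exact hp2 ((Nat.prime_dvd_prime_iff_eq Fact.out (by norm_num)).mp
      ((Fact.out : p.Prime).dvd_of_dvd_pow h1))
  · exact hp3 ((Nat.prime_dvd_prime_iff_eq Fact.out (by norm_num)).mp
      ((Fact.out : p.Prime).dvd_of_dvd_pow h1))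

/- ### Forward directions -/

lemma F2 {p : ℕ} [Fact p.Prime] (hp2 : p ≠ 2)
    (h : ∃ z w : ℚ_[2], w ^ 2 = (p : ℚ_[2]) - 72 * (p : ℚ_[2]) * z ^ 4) : p % 8 = 1 := by
  obtain ⟨z, w, heq⟩ := h
  have hpodd : p % 2 = 1 := Nat.odd_iff.mp ((Fact.out : p.Prime).odd_of_ne_two hp2)
  have hpd : ¬ (2:ℤ) ∣ (p:ℤ) := by omega
  have hnp : ‖((p:ℕ) : ℚ_[2])‖ = 1 := norm_nat_eq_one hpd
  have h72 : (72 : ℚ_[2]) = ((2:ℕ) : ℚ_[2])^3 * ((9:ℕ):ℚ_[2]) := by push_cast; norm_num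
  have hn72 : ‖(72 : ℚ_[2])‖ = (2:ℝ)^(-3 : ℤ) := by
    rw [h72, norm_mul, norm_pow, Padic.norm_p,
      norm_nat_eq_one (by omega : ¬ (2:ℤ) ∣ ((9:ℕ):ℤ))]
    push_cast
    norm_num
  by_cases hz : ‖z‖ ≤ 1
  · have hb1 : ‖(72 : ℚ_[2]) * p * z^4‖ ≤ 1 := by
      rw [norm_mul, norm_mul, norm_pow, hn72, hnp]
      have h4 : ‖z‖^4 ≤ 1 := pow_le_one₀ (norm_nonneg z) hz
      have : ((2:ℝ)^(-3:ℤ)) = 1/8 := by norm_num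
      rw [this]
      nlinarith [pow_nonneg (norm_nonneg z) 4]
    have hsub : ‖(p : ℚ_[2]) - 72 * (p : ℚ_[2]) * z ^ 4‖ ≤ 1 := by
      rw [sub_eq_add_neg]
      refine (Padic.nonarchimedean _ _).trans ?_
      rw [norm_neg]
      exact max_le (by exact_mod_cast hnp.le) hb1
    have hw1 : ‖w‖ ≤ 1 := by
      have hsq : ‖w‖^2 ≤ 1 := by rw [← norm_pow, heq]; exact hsub
      nlinarith [norm_nonneg w]
    set W : ℤ_[2] := ⟨w, hw1⟩ with hW
    set Z : ℤ_[2] := ⟨z, hz⟩ with hZ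
    have hEq : W^2 = ((p:ℕ) : ℤ_[2]) - 72 * ((p:ℕ):ℤ_[2]) * Z^4 := by
      apply Subtype.coe_injective
      push_cast
      exact heq
    have h16 := congrArg (PadicInt.toZModPow 4) hEq
    simp only [map_pow, map_sub, map_mul, map_natCast, map_ofNat] at h16
    have hval : ((p : ZMod (2^4)).val) = p % 2^4 := ZMod.val_natCast _ p
    have := aux2a (p : ZMod (2^4)) (PadicInt.toZModPow 4 W) (PadicInt.toZModPow 4 Z)
      (by rw [hval]; omega) h16
    rw [hval] at this
    omega
  · push_neg at hz
    have hz0 : z ≠ 0 := by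
      intro h0; rw [h0, norm_zero] at hz; linarith
    have hzn : ‖z‖ = (2:ℝ) ^ (-z.valuation) := by
      have := Padic.norm_eq_zpow_neg_valuation hz0
      push_cast at this ⊢
      exact this
    have hb : z.valuation ≤ -1 := by
      by_contra hb'
      push_neg at hb'
      have : (2:ℝ) ^ (-z.valuation) ≤ 1 :=
        zpow_le_one_of_nonpos₀ (by norm_num) (by omega)
      rw [← hzn] at this; linarith
    have hbig : ‖(72:ℚ_[2]) * p * z^4‖ = (2:ℝ) ^ (-3 - 4 * z.valuation) := by
      rw [norm_mul, norm_mul, norm_pow, hn72, hnp, hzn, mul_one,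
        ← zpow_natCast ((2:ℝ) ^ (-z.valuation)) 4, ← zpow_mul, ← zpow_add₀ (by norm_num : (2:ℝ) ≠ 0)]
      ring_nf
    have hlt : ‖((p:ℕ):ℚ_[2])‖ < ‖(72:ℚ_[2]) * p * z^4‖ := by
      rw [hnp, hbig]
      exact one_lt_zpow₀ (by norm_num) (by omega)
    have hy : ‖(p : ℚ_[2]) - 72 * (p:ℚ_[2]) * z^4‖ = (((2:ℕ)):ℝ) ^ (-3 - 4*z.valuation) := by
      rw [norm_sub_eq_of_lt hlt, hbig]; norm_num
    exact absurd (padic_no_odd_sq heq hy (by omega)) id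

lemma F3 {p : ℕ} [Fact p.Prime] (hp3 : p ≠ 3)
    (h : ∃ z w : ℚ_[3], w ^ 2 = (p : ℚ_[3]) - 72 * (p : ℚ_[3]) * z ^ 4) : p % 3 = 1 := by
  obtain ⟨z, w, heq⟩ := h
  have hp3d : p % 3 ≠ 0 := by
    intro h0
    exact hp3 ((Nat.prime_dvd_prime_iff_eq (by norm_num) Fact.out).mp
      (Nat.dvd_of_mod_eq_zero h0)).symm
  have hnp : ‖((p:ℕ) : ℚ_[3])‖ = 1 := norm_nat_eq_one (by omega)
  have h72 : (72 : ℚ_[3]) = ((3:ℕ) : ℚ_[3])^2 * ((8:ℕ):ℚ_[3]) := by push_cast; norm_num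
  have hn72 : ‖(72 : ℚ_[3])‖ = (3:ℝ)^(-2 : ℤ) := by
    rw [h72, norm_mul, norm_pow, Padic.norm_p,
      norm_nat_eq_one (by omega : ¬ (3:ℤ) ∣ ((8:ℕ):ℤ))]
    push_cast
    norm_num
  by_cases hz : ‖z‖ ≤ 1
  · have hb1 : ‖(72 : ℚ_[3]) * p * z^4‖ ≤ 1 := by
      rw [norm_mul, norm_mul, norm_pow, hn72, hnp]
      have h4 : ‖z‖^4 ≤ 1 := pow_le_one₀ (norm_nonneg z) hz
      have : ((3:ℝ)^(-2:ℤ)) = 1/9 := by norm_num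
      rw [this]
      nlinarith [pow_nonneg (norm_nonneg z) 4]
    have hsub : ‖(p : ℚ_[3]) - 72 * (p : ℚ_[3]) * z ^ 4‖ ≤ 1 := by
      rw [sub_eq_add_neg]
      refine (Padic.nonarchimedean _ _).trans ?_
      rw [norm_neg]
      exact max_le (by exact_mod_cast hnp.le) hb1
    have hw1 : ‖w‖ ≤ 1 := by
      have hsq : ‖w‖^2 ≤ 1 := by rw [← norm_pow, heq]; exact hsub
      nlinarith [norm_nonneg w]
    set W : ℤ_[3] := ⟨w, hw1⟩ with hW
    set Z : ℤ_[3] := ⟨z, hz⟩ with hZ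
    have hEq : W^2 = ((p:ℕ) : ℤ_[3]) - 72 * ((p:ℕ):ℤ_[3]) * Z^4 := by
      apply Subtype.coe_injective
      push_cast
      exact heq
    have h9 := congrArg (PadicInt.toZModPow 2) hEq
    simp only [map_pow, map_sub, map_mul, map_natCast, map_ofNat] at h9
    have hval : ((p : ZMod (3^2)).val) = p % 3^2 := ZMod.val_natCast _ p
    have := aux3a (p : ZMod (3^2)) (PadicInt.toZModPow 2 W) (PadicInt.toZModPow 2 Z)
      (by rw [hval]; omega) h9
    rw [hval] at this
    omega
  · push_neg at hz
    have hz0 : z ≠ 0 := by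
      intro h0; rw [h0, norm_zero] at hz; linarith
    have hzn : ‖z‖ = (3:ℝ) ^ (-z.valuation) := by
      have := Padic.norm_eq_zpow_neg_valuation hz0
      push_cast at this ⊢
      exact this
    have hb : z.valuation ≤ -1 := by
      by_contra hb'
      push_neg at hb'
      have : (3:ℝ) ^ (-z.valuation) ≤ 1 :=
        zpow_le_one_of_nonpos₀ (by norm_num) (by omega)
      rw [← hzn] at this; linarith
    set k : ℕ := (-z.valuation).toNat with hkdef
    have hk : (k : ℤ) = -z.valuation := Int.toNat_of_nonneg (by omega)
    have hk1 : 1 ≤ k := by omega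
    set A' : ℚ_[3] := ((3:ℕ) : ℚ_[3])^k * z with hA'def
    set B' : ℚ_[3] := ((3:ℕ) : ℚ_[3])^(2*k) * w with hB'def
    have hA : ‖A'‖ = 1 := by
      rw [hA'def, norm_mul, norm_pow, Padic.norm_p, hzn]
      push_cast
      rw [inv_pow, ← zpow_natCast (3:ℝ) k, ← zpow_neg, ← zpow_add₀ (by norm_num : (3:ℝ) ≠ 0)]
      rw [show -(k:ℤ) + -z.valuation = 0 by omega]
      norm_num
    have hB2 : B'^2 + 72 * ((p:ℕ):ℚ_[3]) * A'^4 = ((p:ℕ):ℚ_[3]) * ((3:ℕ):ℚ_[3])^(4*k) := by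
      rw [hA'def, hB'def]
      linear_combination (((3:ℕ):ℚ_[3])^(4*k)) * heq
    have hBnorm : ‖B'‖ ≤ 1 := by
      have h1 : ‖((p:ℕ):ℚ_[3]) * ((3:ℕ):ℚ_[3])^(4*k)‖ ≤ 1 := by
        rw [norm_mul, norm_pow, Padic.norm_p, hnp, one_mul]
        apply pow_le_one₀ (by positivity)
        rw [inv_le_one_iff₀]; right; push_cast; norm_num
      have h2 : ‖(72:ℚ_[3]) * ((p:ℕ):ℚ_[3]) * A'^4‖ ≤ 1 := by
        rw [norm_mul, norm_mul, norm_pow, hnp, hA, hn72]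
        norm_num
      have hsq : ‖B'‖^2 ≤ 1 := by
        rw [← norm_pow]
        have : B'^2 = ((p:ℕ):ℚ_[3]) * ((3:ℕ):ℚ_[3])^(4*k) - 72 * ((p:ℕ):ℚ_[3]) * A'^4 := by
          linear_combination hB2
        rw [this, sub_eq_add_neg]
        refine (Padic.nonarchimedean _ _).trans ?_
        rw [norm_neg]
        exact max_le h1 h2
      nlinarith [norm_nonneg B']
    set A : ℤ_[3] := ⟨A', hA.le⟩ with hAdef
    set B : ℤ_[3] := ⟨B', hBnorm⟩ with hBdef
    have hEq : B^2 + 72 * ((p:ℕ):ℤ_[3]) * A^4 = ((p:ℕ):ℤ_[3]) * ((3:ℕ):ℤ_[3])^(4*k) := by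
      apply Subtype.coe_injective
      push_cast
      exact hB2
    have h27 := congrArg (PadicInt.toZModPow 3) hEq
    simp only [map_pow, map_add, map_sub, map_mul, map_natCast, map_ofNat] at h27
    obtain ⟨m, hm⟩ : ∃ m, 4*k = 3+m := ⟨4*k - 3, by omega⟩
    rw [hm, pow_add, show ((3:ℕ):ZMod (3^3))^3 = 0 by decide, zero_mul, mul_zero] at h27
    have hu : IsUnit A := PadicInt.isUnit_iff.mpr hA
    have hua : IsUnit (PadicInt.toZModPow 3 A) := hu.map _
    obtain ⟨c, hc⟩ := hua.exists_right_inv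
    have hA3 := aux3u _ _ hc
    have hval : ((p : ZMod (3^3)).val) = p % 3^3 := ZMod.val_natCast _ p
    have := aux3b (p : ZMod (3^3)) (PadicInt.toZModPow 3 A) (PadicInt.toZModPow 3 B)
      (by rw [hval]; omega) hA3 h27
    rw [hval] at this
    omega

lemma Fp {p : ℕ} [Fact p.Prime] (hp2 : p ≠ 2) (hp3 : p ≠ 3)
    (h : ∃ z w : ℚ_[p], w ^ 2 = (p : ℚ_[p]) - 72 * (p : ℚ_[p]) * z ^ 4) :
    ∃ t : ZMod p, 72 * t ^ 4 = 1 := by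
  obtain ⟨z, w, heq⟩ := h
  have hp1 : (1:ℝ) < (p:ℝ) := by exact_mod_cast (Fact.out : p.Prime).one_lt
  have hn72 : ‖(72 : ℚ_[p])‖ = 1 := by
    rw [show (72:ℚ_[p]) = ((72:ℕ):ℚ_[p]) by push_cast; ring]
    exact norm_nat_eq_one (by exact_mod_cast not_dvd_72 hp2 hp3)
  have hnp : ‖((p:ℕ) : ℚ_[p])‖ = (p:ℝ) ^ (-1 : ℤ) := by
    rw [Padic.norm_p, ← zpow_neg_one]
  by_cases hz : ‖z‖ ≤ 1
  · set Z : ℤ_[p] := ⟨z, hz⟩ with hZdef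
    set T : ℤ_[p] := 1 - ((72:ℕ)) * Z^4 with hTdef
    have hcoe : ((T : ℤ_[p]) : ℚ_[p]) = 1 - 72 * z^4 := by
      rw [hTdef]
      simp only [PadicInt.coe_sub, PadicInt.coe_mul, PadicInt.coe_pow, PadicInt.coe_one,
        PadicInt.coe_natCast]
      push_cast; ring
    by_cases hT : (p : ℤ_[p]) ∣ T
    · have h0 : PadicInt.toZMod T = 0 := (toZMod_zero_iff T).mpr hT
      rw [hTdef] at h0
      simp only [map_sub, map_mul, map_pow, map_one, map_natCast] at h0
      push_cast at h0
      exact ⟨PadicInt.toZMod Z, by linear_combination -h0⟩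
    · have hTn : ‖T‖ = 1 := by
        refine le_antisymm (PadicInt.norm_le_one T) ?_
        by_contra hlt
        push_neg at hlt
        exact hT ((PadicInt.norm_lt_one_iff_dvd T).mp hlt)
      have hy : ‖(p : ℚ_[p]) - 72 * (p:ℚ_[p]) * z^4‖ = (p:ℝ) ^ (-1 : ℤ) := by
        rw [show (p:ℚ_[p]) - 72 * (p:ℚ_[p]) * z^4 = ((p:ℕ):ℚ_[p]) * ((T:ℤ_[p]):ℚ_[p]) by
          rw [hcoe]; push_cast; ring]
        rw [norm_mul, PadicInt.padic_norm_e_of_padicInt, hTn, mul_one, hnp]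
      exact absurd (padic_no_odd_sq heq hy (by omega)) id
  · push_neg at hz
    have hz0 : z ≠ 0 := by
      intro h0; rw [h0, norm_zero] at hz; linarith
    have hzn : ‖z‖ = (p:ℝ) ^ (-z.valuation) := Padic.norm_eq_zpow_neg_valuation hz0
    have hb : z.valuation ≤ -1 := by
      by_contra hb'
      push_neg at hb'
      have : (p:ℝ) ^ (-z.valuation) ≤ 1 :=
        zpow_le_one_of_nonpos₀ (by linarith) (by omega)
      rw [← hzn] at this; linarith
    have hbig : ‖(72:ℚ_[p]) * p * z^4‖ = (p:ℝ) ^ (-1 - 4 * z.valuation) := by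
      rw [norm_mul, norm_mul, norm_pow, hn72, hnp, hzn, one_mul,
        ← zpow_natCast ((p:ℝ) ^ (-z.valuation)) 4, ← zpow_mul,
        ← zpow_add₀ (by linarith : (p:ℝ) ≠ 0)]
      ring_nf
    have hlt : ‖((p:ℕ):ℚ_[p])‖ < ‖(72:ℚ_[p]) * p * z^4‖ := by
      rw [hnp, hbig]
      exact zpow_lt_zpow_right₀ hp1 (by omega)
    have hy : ‖(p : ℚ_[p]) - 72 * (p:ℚ_[p]) * z^4‖ = (p:ℝ) ^ (-1 - 4*z.valuation) := by
      rw [norm_sub_eq_of_lt hlt, hbig]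
    exact absurd (padic_no_odd_sq heq hy (by omega)) id

/- ### Reverse directions -/

lemma R2 {p : ℕ} [Fact p.Prime] (h8 : p % 8 = 1) :
    ∃ z w : ℚ_[2], w ^ 2 = (p : ℚ_[2]) - 72 * (p : ℚ_[2]) * z ^ 4 := by
  have hcond : ‖1 - ((p:ℕ) : ℤ_[2])‖ < ‖(2 : ℤ_[2])‖ ^ 2 := by
    have he : (1 - ((p:ℕ):ℤ_[2])) = (((1 - (p:ℤ)) : ℤ) : ℤ_[2]) := by push_cast; ring
    have h1 : ‖(((1 - (p:ℤ)) : ℤ) : ℤ_[2])‖ ≤ (((2:ℕ)):ℝ) ^ (-(3:ℕ) : ℤ) := by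
      rw [PadicInt.norm_int_le_pow_iff_dvd]
      push_cast
      omega
    have h2 : ‖(2 : ℤ_[2])‖ = (2:ℝ)⁻¹ := by
      rw [show (2 : ℤ_[2]) = ((2:ℕ) : ℤ_[2]) by norm_num]
      exact_mod_cast PadicInt.norm_p
    rw [he, h2]
    calc ‖(((1 - (p:ℤ)) : ℤ) : ℤ_[2])‖ ≤ (((2:ℕ)):ℝ) ^ (-(3:ℕ) : ℤ) := h1
      _ < (2:ℝ)⁻¹ ^ 2 := by push_cast; norm_num
  obtain ⟨W, hW⟩ := sq_root_padic ((p:ℕ) : ℤ_[2]) hcond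
  refine ⟨0, (W : ℚ_[2]), ?_⟩
  have := congrArg (fun x : ℤ_[2] => (x : ℚ_[2])) hW
  simp only [PadicInt.coe_pow, PadicInt.coe_natCast] at this
  rw [this]
  ring

lemma R3 {p : ℕ} [Fact p.Prime] (h3 : p % 3 = 1) :
    ∃ z w : ℚ_[3], w ^ 2 = (p : ℚ_[3]) - 72 * (p : ℚ_[3]) * z ^ 4 := by
  have hcond : ‖1 - ((p:ℕ) : ℤ_[3])‖ < ‖(2 : ℤ_[3])‖ ^ 2 := by
    have he : (1 - ((p:ℕ):ℤ_[3])) = (((1 - (p:ℤ)) : ℤ) : ℤ_[3]) := by push_cast; ring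
    have h1 : ‖(((1 - (p:ℤ)) : ℤ) : ℤ_[3])‖ < 1 := by
      rw [PadicInt.norm_int_lt_one_iff_dvd]
      omega
    have h2 : ‖(2 : ℤ_[3])‖ = 1 := by
      refine le_antisymm (PadicInt.norm_le_one _) ?_
      by_contra hlt
      push_neg at hlt
      rw [show (2 : ℤ_[3]) = ((2:ℤ) : ℤ_[3]) by norm_num,
        PadicInt.norm_int_lt_one_iff_dvd] at hlt
      omega
    rw [he, h2, one_pow]
    exact h1
  obtain ⟨W, hW⟩ := sq_root_padic ((p:ℕ) : ℤ_[3]) hcond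
  refine ⟨0, (W : ℚ_[3]), ?_⟩
  have := congrArg (fun x : ℤ_[3] => (x : ℚ_[3])) hW
  simp only [PadicInt.coe_pow, PadicInt.coe_natCast] at this
  rw [this]
  ring

lemma Rp {p : ℕ} [Fact p.Prime] (hp2 : p ≠ 2) (hp3 : p ≠ 3)
    (h : ∃ t : ZMod p, 72 * t ^ 4 = 1) :
    ∃ z w : ℚ_[p], w ^ 2 = (p : ℚ_[p]) - 72 * (p : ℚ_[p]) * z ^ 4 := by
  haveI : NeZero p := ⟨(Fact.out : p.Prime).ne_zero⟩
  obtain ⟨t, ht⟩ := h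
  have ht0 : t ≠ 0 := by
    intro h0
    rw [h0] at ht
    simp at ht
  set a : ℤ_[p] := ((t.val : ℕ) : ℤ_[p]) with hadef
  have hta : PadicInt.toZMod a = t := by
    rw [hadef, map_natCast]
    exact ZMod.natCast_rightInverse t
  have ha : PadicInt.toZMod (72 * a ^ 4 - (1 - ((p:ℕ) : ℤ_[p]))) = 0 := by
    simp only [map_sub, map_mul, map_pow, map_one, map_natCast, map_ofNat, hta,
      ZMod.natCast_self]
    rw [show ((72:ZMod p)) * t^4 = 1 from by exact_mod_cast ht]
    ring
  have hd : PadicInt.toZMod (288 * a ^ 3 : ℤ_[p]) ≠ 0 := by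
    simp only [map_mul, map_pow, hta, map_ofNat]
    refine mul_ne_zero ?_ (pow_ne_zero 3 ht0)
    intro h0
    rw [show ((288 : ZMod p)) = ((288:ℕ) : ZMod p) by push_cast; ring,
      ZMod.natCast_eq_zero_iff] at h0
    exact not_dvd_288 hp2 hp3 h0
  obtain ⟨z, hz⟩ := quartic_root_padic (1 - ((p:ℕ) : ℤ_[p])) a ha hd
  refine ⟨(z : ℚ_[p]), ((p:ℕ) : ℚ_[p]), ?_⟩
  have hq := congrArg (fun x : ℤ_[p] => (x : ℚ_[p])) hz
  simp only [PadicInt.coe_mul, PadicInt.coe_pow, PadicInt.coe_sub, PadicInt.coe_one,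
    PadicInt.coe_natCast] at hq
  push_cast at hq ⊢
  linear_combination (p:ℚ_[p]) * hq

/- ### ZMod p algebra -/

lemma square6 {p : ℕ} [Fact p.Prime] (hp2 : p ≠ 2) (h24 : p % 24 = 1) :
    ∃ s : ZMod p, s ^ 2 = 6 := by
  have hs2 : IsSquare (2 : ZMod p) :=
    (ZMod.exists_sq_eq_two_iff hp2).mpr (Or.inl (by omega))
  have hs3 : IsSquare (3 : ZMod p) := by
    haveI : Fact (Nat.Prime 3) := ⟨by norm_num⟩
    have h := (ZMod.exists_sq_eq_prime_iff_of_mod_four_eq_one (p := p) (q := 3)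
      (by omega) (by norm_num)).mpr ?_
    · rw [show ((3:ℕ) : ZMod p) = (3 : ZMod p) by push_cast; ring] at h
      exact h
    · have : ((p:ℕ) : ZMod 3) = 1 := by
        rw [← ZMod.natCast_mod, show p % 3 = 1 by omega, Nat.cast_one]
      rw [this]
      exact IsSquare.one
  have hs6 : IsSquare (6 : ZMod p) := by
    rw [show (6 : ZMod p) = 2 * 3 by norm_num]
    exact hs2.mul hs3
  obtain ⟨s, hs⟩ := hs6
  exact ⟨s, by rw [pow_two]; exact hs.symm⟩

lemma n72_ne_zero {p : ℕ} [Fact p.Prime] (hp2 : p ≠ 2) (hp3 : p ≠ 3) :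
    (72 : ZMod p) ≠ 0 := by
  intro h0
  rw [show ((72 : ZMod p)) = ((72:ℕ) : ZMod p) by push_cast; ring,
    ZMod.natCast_eq_zero_iff] at h0
  exact not_dvd_72 hp2 hp3 h0

lemma forward_quartic {p : ℕ} [Fact p.Prime]
    {t s : ZMod p} (ht : 72 * t ^ 4 = 1) (hs : s ^ 2 = 6) :
    ∃ x : ZMod p, x ^ 4 = 2 := by
  have key : ((t * s) ^ 4) * 2 = 1 := by
    linear_combination (2 * t^4 * (s^2 + 6)) * hs + ht
  refine ⟨(t * s)⁻¹, ?_⟩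
  rw [inv_pow, eq_inv_of_mul_eq_one_left key, inv_inv]

lemma reverse_quartic {p : ℕ} [Fact p.Prime] (hp2 : p ≠ 2) (hp3 : p ≠ 3)
    {x s : ZMod p} (hx : x ^ 4 = 2) (hs : s ^ 2 = 6) :
    ∃ t : ZMod p, 72 * t ^ 4 = 1 := by
  have key : ((x * s) ^ 4) = 72 := by
    linear_combination s^4 * hx + (2 * (s^2 + 6)) * hs
  refine ⟨(x * s)⁻¹, ?_⟩
  rw [inv_pow, key]
  exact mul_inv_cancel₀ (n72_ne_zero hp2 hp3)

/- ### Main theorem -/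

theorem dual_Cp_locally_solvable_iff (p : ℕ) [Fact p.Prime] (hp2 : p ≠ 2) (hp3 : p ≠ 3) :
    ((∃ z w : ℝ, w ^ 2 = (p : ℝ) - 72 * (p : ℝ) * z ^ 4) ∧
      (∃ z w : ℚ_[2], w ^ 2 = (p : ℚ_[2]) - 72 * (p : ℚ_[2]) * z ^ 4) ∧
      (∃ z w : ℚ_[3], w ^ 2 = (p : ℚ_[3]) - 72 * (p : ℚ_[3]) * z ^ 4) ∧
      (∃ z w : ℚ_[p], w ^ 2 = (p : ℚ_[p]) - 72 * (p : ℚ_[p]) * z ^ 4)) ↔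
      (p % 24 = 1 ∧ ∃ x : ℤ, x ^ 4 ≡ 2 [ZMOD (p : ℤ)]) := by
  haveI : NeZero p := ⟨(Fact.out : p.Prime).ne_zero⟩
  constructor
  · rintro ⟨-, h2, h3, hp⟩
    have h8 := F2 hp2 h2
    have h3' := F3 hp3 h3
    have h24 : p % 24 = 1 := by omega
    refine ⟨h24, ?_⟩
    obtain ⟨t, ht⟩ := Fp hp2 hp3 hp
    obtain ⟨s, hs⟩ := square6 hp2 h24
    obtain ⟨x, hx⟩ := forward_quartic ht hs
    refine ⟨(x.val : ℤ), ?_⟩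
    rw [← ZMod.intCast_eq_intCast_iff]
    push_cast
    rw [ZMod.natCast_rightInverse x]
    exact_mod_cast hx
  · rintro ⟨h24, x, hx⟩
    have hxz : ((x : ZMod p)) ^ 4 = 2 := by
      have := (ZMod.intCast_eq_intCast_iff _ _ _).mpr hx
      push_cast at this
      exact_mod_cast this
    obtain ⟨s, hs⟩ := square6 hp2 h24
    obtain ⟨t, ht⟩ := reverse_quartic hp2 hp3 hxz hs
    refine ⟨⟨0, Real.sqrt p, by rw [Real.sq_sqrt (by positivity : (0:ℝ) ≤ (p:ℝ))]; ring⟩,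
      R2 (by omega), R3 (by omega), Rp hp2 hp3 ⟨t, ht⟩⟩
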